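/- Let ε = 0, k ∈ {−1,0,1}, β > 0, α, c ∈ ℝ, let I be an open interval on which −k t² + α t + c > 0, and set b(t) = √(−k t² + α t + c). Then for all t ∈ I the energy density and pressure satisfy ρ(t) = p(t) = (α² + 4kc)/(4(−k t² + α t + c)²); in particular the source is a stiff fluid (ρ = p). -/

import Mathlib

/-- Orthonormal-tetrad Einstein tensor component `G₀₀` of the LRS metric
`ds² = −dt² + β²dz² + b(t)²[(dr − εr dz)² + Σ(r,k)²dφ²]`. -/
noncomputable def G00 (k ε β : ℝ) (b : ℝ → ℝ) (t : ℝ) : ℝ :=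
  (k + (deriv b t) ^ 2) / (b t) ^ 2 - 3 * ε / β ^ 2

/-- Component `G₀₃`. -/
noncomputable def G03 (k ε β : ℝ) (b : ℝ → ℝ) (t : ℝ) : ℝ :=
  -2 * ε * (deriv b t) / (β * b t)

/-- Component `G₁₁ = G₂₂`. -/
noncomputable def G22 (k ε β : ℝ) (b : ℝ → ℝ) (t : ℝ) : ℝ :=
  -(deriv (deriv b) t) / (b t) + ε / β ^ 2

/-- Component `G₃₃`. -/
noncomputable def G33 (k ε β : ℝ) (b : ℝ → ℝ) (t : ℝ) : ℝ :=
  -2 * (deriv (deriv b) t) / (b t) - (k + (deriv b t) ^ 2) / (b t) ^ 2 + ε / β ^ 2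

/-- Energy density `ρ = G₂₂ + G₀₀ − G₃₃`. -/
noncomputable def rho (k ε β : ℝ) (b : ℝ → ℝ) (t : ℝ) : ℝ :=
  G22 k ε β b t + G00 k ε β b t - G33 k ε β b t

/-- Pressure `p = G₂₂`. -/
noncomputable def pres (k ε β : ℝ) (b : ℝ → ℝ) (t : ℝ) : ℝ :=
  G22 k ε β b t

lemma sqrt_div_key (kk A S : ℝ) (hS : 0 < S) :
    (-(2 * kk) * (2 * S) - A * (2 * (A / (2 * S)))) / (2 * S) ^ 2 =
      (-(4 * kk * S ^ 2) - A ^ 2) / (4 * S ^ 2 * S) := by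
  field_simp
  ring

lemma stiff_derivs (k α c : ℝ) (x y : ℝ)
    (hpos : ∀ t ∈ Set.Ioo x y, 0 < -k * t ^ 2 + α * t + c) :
    ∀ t ∈ Set.Ioo x y,
      (deriv (fun s => Real.sqrt (-k * s ^ 2 + α * s + c)) t =
        (α - 2 * k * t) / (2 * Real.sqrt (-k * t ^ 2 + α * t + c))) ∧
      (deriv (deriv (fun s => Real.sqrt (-k * s ^ 2 + α * s + c))) t =
        -(α ^ 2 + 4 * k * c) /
          (4 * (-k * t ^ 2 + α * t + c) * Real.sqrt (-k * t ^ 2 + α * t + c))) := by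
  have hqd : ∀ s : ℝ, HasDerivAt (fun s => -k * s ^ 2 + α * s + c) (α - 2 * k * s) s := by
    intro s
    have h := (((hasDerivAt_pow 2 s).const_mul (-k)).add
      (((hasDerivAt_id s).const_mul α).add_const c))
    have e : (fun s => -k * s ^ 2 + α * s + c) = ((fun y => -k * y ^ 2) + fun x => α * id x + c) := by
      funext s; simp only [Pi.add_apply, id]; ring
    rw [e]
    refine h.congr_deriv ?_
    rw [show (2:ℕ) - 1 = 1 from rfl]; push_cast; ring
  intro t ht
  have hbd : ∀ s ∈ Set.Ioo x y, HasDerivAt (fun s => Real.sqrt (-k * s ^ 2 + α * s + c))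
      ((α - 2 * k * s) / (2 * Real.sqrt (-k * s ^ 2 + α * s + c))) s := fun s hs =>
    (hqd s).sqrt (ne_of_gt (hpos s hs))
  have hqt : 0 < -k * t ^ 2 + α * t + c := hpos t ht
  have hS : 0 < Real.sqrt (-k * t ^ 2 + α * t + c) := Real.sqrt_pos.mpr hqt
  have hS2 : Real.sqrt (-k * t ^ 2 + α * t + c) ^ 2 = -k * t ^ 2 + α * t + c :=
    Real.sq_sqrt hqt.le
  have h1 : deriv (fun s => Real.sqrt (-k * s ^ 2 + α * s + c)) t =
      (α - 2 * k * t) / (2 * Real.sqrt (-k * t ^ 2 + α * t + c)) := (hbd t ht).deriv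
  refine ⟨h1, ?_⟩
  have hev : deriv (fun s => Real.sqrt (-k * s ^ 2 + α * s + c)) =ᶠ[nhds t]
      (fun s => (α - 2 * k * s) / (2 * Real.sqrt (-k * s ^ 2 + α * s + c))) :=
    Filter.eventuallyEq_of_mem (isOpen_Ioo.mem_nhds ht) (fun s hs => (hbd s hs).deriv)
  rw [hev.deriv_eq]
  have hnum : HasDerivAt (fun s : ℝ => α - 2 * k * s) (-(2 * k)) t := by
    have h := ((hasDerivAt_id t).const_mul (2 * k)).const_sub α
    exact h.congr_deriv (by ring)
  have hden : HasDerivAt (fun s => 2 * Real.sqrt (-k * s ^ 2 + α * s + c))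
      (2 * ((α - 2 * k * t) / (2 * Real.sqrt (-k * t ^ 2 + α * t + c)))) t :=
    (hbd t ht).const_mul 2
  have hdiv := hnum.div hden (by positivity)
  rw [HasDerivAt.deriv (f := fun s => (α - 2 * k * s) / (2 * Real.sqrt (-k * s ^ 2 + α * s + c))) hdiv]
  rw [sqrt_div_key k (α - 2 * k * t) _ hS, hS2,
    show -(4 * k * (-k * t ^ 2 + α * t + c)) - (α - 2 * k * t) ^ 2 = -(α ^ 2 + 4 * k * c) by ring]

lemma alg_p (k A K S q β : ℝ) (hS : 0 < S) (hS2 : S ^ 2 = q) :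
    -(-K / (4 * q * S)) / S + 0 / β ^ 2 = K / (4 * q ^ 2) := by
  subst hS2
  have h2 : (0:ℝ) < S ^ 2 := pow_pos hS 2
  field_simp
  ring_nf

lemma alg_rho (k A K S q β : ℝ) (hS : 0 < S) (hS2 : S ^ 2 = q)
    (hK : A ^ 2 + 4 * k * q = K) :
    (-(-K / (4 * q * S)) / S + 0 / β ^ 2) +
      ((k + (A / (2 * S)) ^ 2) / S ^ 2 - 3 * 0 / β ^ 2) -
      (-2 * (-K / (4 * q * S)) / S - (k + (A / (2 * S)) ^ 2) / S ^ 2 + 0 / β ^ 2) =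
      K / (4 * q ^ 2) := by
  subst hS2
  subst hK
  have h2 : (0:ℝ) < S ^ 2 := pow_pos hS 2
  field_simp
  ring

/-- For `ε = 0`, `k ∈ {−1,0,1}`, `β > 0`, constants `α, c`, and
`b(t) = √(−k t² + α t + c)` on an open interval where the radicand is positive, the source
is a stiff fluid: `ρ(t) = p(t) = (α² + 4kc)/(4(−k t² + α t + c)²)`. -/
theorem eps_zero_stiff_fluid (k β α c : ℝ) (hk : k = -1 ∨ k = 0 ∨ k = 1) (hβ : 0 < β)
    (I : Set ℝ) (hI : ∃ x y : ℝ, I = Set.Ioo x y)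
    (hpos : ∀ t ∈ I, 0 < -k * t ^ 2 + α * t + c) :
    ∀ t ∈ I,
      rho k 0 β (fun s => Real.sqrt (-k * s ^ 2 + α * s + c)) t =
          (α ^ 2 + 4 * k * c) / (4 * (-k * t ^ 2 + α * t + c) ^ 2) ∧
      pres k 0 β (fun s => Real.sqrt (-k * s ^ 2 + α * s + c)) t =
          (α ^ 2 + 4 * k * c) / (4 * (-k * t ^ 2 + α * t + c) ^ 2) ∧
      rho k 0 β (fun s => Real.sqrt (-k * s ^ 2 + α * s + c)) t =
          pres k 0 β (fun s => Real.sqrt (-k * s ^ 2 + α * s + c)) t := by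
  obtain ⟨x, y, rfl⟩ := hI
  intro t ht
  obtain ⟨h1, h2⟩ := stiff_derivs k α c x y hpos t ht
  have hqt : 0 < -k * t ^ 2 + α * t + c := hpos t ht
  have hS : 0 < Real.sqrt (-k * t ^ 2 + α * t + c) := Real.sqrt_pos.mpr hqt
  have hS2 : Real.sqrt (-k * t ^ 2 + α * t + c) ^ 2 = -k * t ^ 2 + α * t + c :=
    Real.sq_sqrt hqt.le
  have hrho : rho k 0 β (fun s => Real.sqrt (-k * s ^ 2 + α * s + c)) t =
      (α ^ 2 + 4 * k * c) / (4 * (-k * t ^ 2 + α * t + c) ^ 2) := by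
    simp only [rho, G22, G00, G33, h1, h2]
    exact alg_rho k (α - 2 * k * t) (α ^ 2 + 4 * k * c)
      (Real.sqrt (-k * t ^ 2 + α * t + c)) (-k * t ^ 2 + α * t + c) β hS hS2 (by ring)
  have hp : pres k 0 β (fun s => Real.sqrt (-k * s ^ 2 + α * s + c)) t =
      (α ^ 2 + 4 * k * c) / (4 * (-k * t ^ 2 + α * t + c) ^ 2) := by
    simp only [pres, G22, h1, h2]
    exact alg_p k (α - 2 * k * t) (α ^ 2 + 4 * k * c)
      (Real.sqrt (-k * t ^ 2 + α * t + c)) (-k * t ^ 2 + α * t + c) β hS hS2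
  exact ⟨hrho, hp, hrho.trans hp.symm⟩
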